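/- Let E be a directed graph, K a field, and X a subset of E^0. Let F be the subgraph with F^0 = E^0 \ X and F^1 = E^1 \ (s^{-1}(X) ∪ r^{-1}(X)). Then the quotient of the path algebra KE by the two-sided ideal generated by the vertices in X is isomorphic as a K-algebra to KF. -/

import Mathlib

/-- A directed graph: vertices, edges, source and range maps. -/
structure DGraph : Type 1 where
  V : Type
  Edge : Type
  s : Edge → V
  r : Edge → V

namespace DGraph

/-- A list of edges is composable if consecutive edges match up. -/
def IsComposable (G : DGraph) (l : List G.Edge) : Prop :=
  l.Chain' (fun e f => G.r e = G.s f)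

/-- A path in `G`: either a trivial path at a vertex, or a nonempty composable list of edges. -/
def GPath (G : DGraph) : Type :=
  G.V ⊕ {l : List G.Edge // l ≠ [] ∧ G.IsComposable l}

namespace GPath

variable {G : DGraph}

/-- The source of a path. -/
def src : GPath G → G.V
  | Sum.inl v => v
  | Sum.inr l => G.s (l.1.head l.2.1)

/-- The range of a path. -/
def rng : GPath G → G.V
  | Sum.inl v => v
  | Sum.inr l => G.r (l.1.getLast l.2.1)

/-- The length of a path. -/
def length : GPath G → ℕ
  | Sum.inl _ => 0
  | Sum.inr l => l.1.length

/-- The trivial path at a vertex. -/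
def ofVertex (v : G.V) : GPath G := Sum.inl v

/-- The length-one path given by an edge. -/
def ofEdge (e : G.Edge) : GPath G :=
  Sum.inr ⟨[e], by
    refine ⟨by simp, ?_⟩
    unfold IsComposable
    first | exact List.chain'_singleton e | exact List.isChain_singleton e | constructor | simp [List.Chain']⟩

/-- Concatenation of composable paths. -/
def comp : (p q : GPath G) → p.rng = q.src → GPath G
  | Sum.inl _, q, _ => q
  | Sum.inr l, Sum.inl _, _ => Sum.inr l
  | Sum.inr l, Sum.inr m, h => Sum.inr ⟨l.1 ++ m.1, by
      refine ⟨by simp [l.2.1], l.2.2.append m.2.2 ?_⟩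
      intro x hx y hy
      rw [List.getLast?_eq_some_getLast l.2.1] at hx
      rw [List.head?_eq_head m.2.1] at hy
      cases hx
      cases hy
      exact h⟩

end GPath

end DGraph

open DGraph

/-- A realization of the path algebra of the graph `G` over the field `K`:
a `K`-algebra with a basis indexed by the paths of `G`, multiplying by concatenation. -/
structure PathAlgebraOn (K : Type) [Field K] (G : DGraph) (A : Type)
    [NonUnitalRing A] [Module K A] where
  basis : Module.Basis (GPath G) K A
  mul_comp : ∀ (p q : GPath G) (h : p.rng = q.src),
      basis p * basis q = basis (p.comp q h)
  mul_ncomp : ∀ p q : GPath G, p.rng ≠ q.src → basis p * basis q = 0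

/-- The subgraph obtained by deleting a set of vertices (and all incident edges). -/
def DGraph.vertexDelete (G : DGraph) (X : Set G.V) : DGraph where
  V := {v : G.V // v ∉ X}
  Edge := {e : G.Edge // G.s e ∉ X ∧ G.r e ∉ X}
  s e := ⟨G.s e.1, e.2.1⟩
  r e := ⟨G.r e.1, e.2.2⟩

/-! ### Auxiliary development -/

open DGraph GPath

section Aux

variable {G : DGraph} {X : Set G.V}

/-- A path of `G` is *good* (w.r.t. `X`) if it avoids `X` entirely. -/
def GoodP (X : Set G.V) : GPath G → Prop
  | Sum.inl v => v ∉ X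
  | Sum.inr l => ∀ e ∈ l.1, G.s e ∉ X ∧ G.r e ∉ X

/-- Inclusion of paths of the vertex-deleted graph into paths of `G`. -/
def iotaP (X : Set G.V) : GPath (G.vertexDelete X) → GPath G
  | Sum.inl v => Sum.inl v.1
  | Sum.inr l => Sum.inr ⟨l.1.map Subtype.val, by
      refine ⟨fun h => l.2.1 (List.map_eq_nil_iff.1 h), ?_⟩
      rw [DGraph.IsComposable]
      show List.IsChain _ _
      exact (List.isChain_map Subtype.val).2 (l.2.2.imp (fun {a b} h => congrArg Subtype.val h))⟩

lemma iotaP_src (q : GPath (G.vertexDelete X)) : (iotaP X q).src = (q.src).1 := by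
  cases q with
  | inl v => rfl
  | inr l =>
      show G.s ((l.1.map Subtype.val).head _) = _
      exact congrArg G.s (List.head_map ..)

lemma iotaP_rng (q : GPath (G.vertexDelete X)) : (iotaP X q).rng = (q.rng).1 := by
  cases q with
  | inl v => rfl
  | inr l =>
      show G.r ((l.1.map Subtype.val).getLast _) = _
      exact congrArg G.r (List.getLast_map ..)

lemma iotaP_inj : Function.Injective (iotaP (G := G) X) := by
  rintro (v | l) (w | m) h <;> simp only [iotaP] at h
  · exact congrArg Sum.inl (Subtype.ext (Sum.inl.inj h))
  · exact absurd h (by simp)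
  · exact absurd h (by simp)
  · replace h := Sum.inr.inj h
    refine congrArg Sum.inr ?_
    exact Subtype.ext (List.map_injective_iff.2 Subtype.val_injective
      (congrArg Subtype.val h))

lemma good_iotaP (q : GPath (G.vertexDelete X)) : GoodP X (iotaP X q) := by
  cases q with
  | inl v => exact v.2
  | inr l =>
      intro e he
      simp only [iotaP, List.mem_map] at he
      obtain ⟨f, _, rfl⟩ := List.mem_map.1 he
      exact f.2

lemma exists_iotaP {p : GPath G} (hp : GoodP X p) : ∃ q, iotaP X q = p := by
  cases p with
  | inl v => exact ⟨Sum.inl ⟨v, hp⟩, rfl⟩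
  | inr l =>
      have hp' : ∀ e ∈ l.1, G.s e ∉ X ∧ G.r e ∉ X := hp
      refine ⟨Sum.inr ⟨l.1.pmap (fun e he => (⟨e, he⟩ : (G.vertexDelete X).Edge)) hp', ?_, ?_⟩, ?_⟩
      · exact fun h => l.2.1 (List.pmap_eq_nil_iff.1 h)
      · have hmap : List.map Subtype.val (l.1.pmap
            (fun e he => (⟨e, he⟩ : (G.vertexDelete X).Edge)) hp') = l.1 := by
          rw [List.map_pmap]
          exact (List.pmap_eq_map _).trans (List.map_id _)
        have := l.2.2
        rw [DGraph.IsComposable, ← hmap] at this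
        change List.IsChain _ _ at this
        rw [List.isChain_map] at this
        exact this.imp (fun {a b} h => Subtype.ext h)
      · show Sum.inr _ = Sum.inr _
        refine congrArg Sum.inr (Subtype.ext ?_)
        show List.map Subtype.val _ = _
        exact (List.map_pmap (l := l.1) hp').trans ((List.pmap_eq_map _).trans (List.map_id _))

lemma range_iff_good {p : GPath G} : (∃ q, iotaP X q = p) ↔ GoodP X p :=
  ⟨fun ⟨q, hq⟩ => hq ▸ good_iotaP q, exists_iotaP⟩

lemma good_src {p : GPath G} (hp : GoodP X p) : p.src ∉ X := by
  cases p with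
  | inl v => exact hp
  | inr l => exact (hp _ (List.head_mem l.2.1)).1

lemma good_rng {p : GPath G} (hp : GoodP X p) : p.rng ∉ X := by
  cases p with
  | inl v => exact hp
  | inr l => exact (hp _ (List.getLast_mem l.2.1)).2

lemma good_comp {p q : GPath G} (h : p.rng = q.src) (hc : GoodP X (p.comp q h)) :
    GoodP X p ∧ GoodP X q := by
  cases p with
  | inl v =>
      have hq : GoodP X q := hc
      refine ⟨?_, hq⟩
      have := good_src hq
      rw [← h] at this
      exact this
  | inr l =>
      cases q with
      | inl w =>
          have hl : GoodP X (Sum.inr l : GPath G) := hc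
          refine ⟨hl, ?_⟩
          have := good_rng hl
          rw [h] at this
          exact this
      | inr m =>
          constructor
          · intro e he
            exact hc e (List.mem_append.2 (Or.inl he))
          · intro e he
            exact hc e (List.mem_append.2 (Or.inr he))

lemma iotaP_comp (q₁ q₂ : GPath (G.vertexDelete X)) (h : q₁.rng = q₂.src) :
    iotaP X (q₁.comp q₂ h) = (iotaP X q₁).comp (iotaP X q₂)
      (by rw [iotaP_rng, iotaP_src, h]) := by
  cases q₁ with
  | inl v => cases q₂ <;> rfl
  | inr l =>
      cases q₂ with
      | inl w => rfl
      | inr m =>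
          show Sum.inr _ = Sum.inr _
          rw [Sum.inr.injEq]
          exact Subtype.ext List.map_append

end Aux

section Alg

variable {K : Type} [Field K] {G : DGraph} {X : Set G.V}
    {A B : Type} [NonUnitalRing A] [Module K A] [SMulCommClass K A A] [IsScalarTower K A A]
    [NonUnitalRing B] [Module K B] [SMulCommClass K B B] [IsScalarTower K B B]
    (PA : PathAlgebraOn K G A) (PB : PathAlgebraOn K (G.vertexDelete X) B)

open Classical in
/-- The value of the quotient map on a basis path. -/
noncomputable def fB (p : GPath G) : B :=
  if h : ∃ q, iotaP X q = p then PB.basis h.choose else 0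

lemma fB_iota (q : GPath (G.vertexDelete X)) : fB PB (iotaP X q) = PB.basis q := by
  rw [fB, dif_pos ⟨q, rfl⟩]
  congr 1
  exact iotaP_inj (Classical.choose_spec (⟨q, rfl⟩ : ∃ q', iotaP X q' = iotaP X q))

lemma fB_bad (p : GPath G) (hp : ¬ GoodP X p) : fB PB p = 0 := by
  rw [fB, dif_neg]
  exact fun h => hp (range_iff_good.1 h)

/-- The quotient map, as a linear map. -/
noncomputable def phiL : A →ₗ[K] B := PA.basis.constr K (fB PB)

/-- The section, as a linear map. -/
noncomputable def psiL : B →ₗ[K] A := PB.basis.constr K (fun q => PA.basis (iotaP X q))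

lemma phiL_basis (p : GPath G) : phiL PA PB (PA.basis p) = fB PB p :=
  Module.Basis.constr_basis _ _ _ _

lemma psiL_basis (q : GPath (G.vertexDelete X)) :
    psiL PA PB (PB.basis q) = PA.basis (iotaP X q) :=
  Module.Basis.constr_basis _ _ _ _

lemma phi_psi (b : B) : phiL PA PB (psiL PA PB b) = b := by
  have h : (phiL PA PB).comp (psiL PA PB) = LinearMap.id :=
    PB.basis.ext fun q => by
      rw [LinearMap.comp_apply, LinearMap.id_apply, psiL_basis, phiL_basis, fB_iota]
  exact DFunLike.congr_fun h b

lemma phiL_mul_basis (p q : GPath G) :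
    phiL PA PB (PA.basis p * PA.basis q) =
      phiL PA PB (PA.basis p) * phiL PA PB (PA.basis q) := by
  rw [phiL_basis, phiL_basis]
  by_cases hc : p.rng = q.src
  · rw [PA.mul_comp p q hc, phiL_basis]
    by_cases hp : GoodP X p
    · by_cases hq : GoodP X q
      · obtain ⟨q₁, rfl⟩ := exists_iotaP hp
        obtain ⟨q₂, rfl⟩ := exists_iotaP hq
        have h' : q₁.rng = q₂.src := Subtype.ext (by rw [← iotaP_rng, ← iotaP_src, hc])
        have hcomp : (iotaP X q₁).comp (iotaP X q₂) hc = iotaP X (q₁.comp q₂ h') :=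
          (iotaP_comp q₁ q₂ h').symm
        rw [hcomp, fB_iota, fB_iota, fB_iota, PB.mul_comp q₁ q₂ h']
      · rw [fB_bad PB _ hq, mul_zero, fB_bad]
        exact fun hcg => hq (good_comp hc hcg).2
    · rw [fB_bad PB _ hp, zero_mul, fB_bad]
      exact fun hcg => hp (good_comp hc hcg).1
  · rw [PA.mul_ncomp p q hc, map_zero]
    by_cases hp : GoodP X p
    · by_cases hq : GoodP X q
      · obtain ⟨q₁, rfl⟩ := exists_iotaP hp
        obtain ⟨q₂, rfl⟩ := exists_iotaP hq
        rw [fB_iota, fB_iota, PB.mul_ncomp q₁ q₂]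
        intro h'
        exact hc (by rw [iotaP_rng, iotaP_src, h'])
      · rw [fB_bad PB _ hq, mul_zero]
    · rw [fB_bad PB _ hp, zero_mul]

lemma phiL_mul (x y : A) : phiL PA PB (x * y) = phiL PA PB x * phiL PA PB y := by
  have h : (LinearMap.mul K A).compr₂ (phiL PA PB) =
      (LinearMap.mul K B).compl₁₂ (phiL PA PB) (phiL PA PB) :=
    PA.basis.ext fun p => PA.basis.ext fun q => by
      simpa using phiL_mul_basis PA PB p q
  simpa using DFunLike.congr_fun (DFunLike.congr_fun h x) y

/-- The quotient map, as a non-unital algebra homomorphism. -/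
noncomputable def phiA : A →ₙₐ[K] B where
  toFun := phiL PA PB
  map_smul' := map_smul _
  map_zero' := map_zero _
  map_add' := map_add _
  map_mul' := phiL_mul PA PB

lemma gen_mem {v : G.V} (hv : v ∈ X) :
    PA.basis (GPath.ofVertex v) ∈
      TwoSidedIdeal.span {x : A | ∃ v ∈ X, x = PA.basis (GPath.ofVertex v)} :=
  TwoSidedIdeal.subset_span ⟨v, hv, rfl⟩

lemma smul_list_mem (l : List G.Edge) :
    ∀ (hl : l ≠ [] ∧ G.IsComposable l), (∃ e ∈ l, G.s e ∈ X ∨ G.r e ∈ X) → ∀ c : K,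
    c • PA.basis (Sum.inr ⟨l, hl⟩) ∈
      TwoSidedIdeal.span {x : A | ∃ v ∈ X, x = PA.basis (GPath.ofVertex v)} := by
  induction l with
  | nil => exact fun hl => absurd rfl hl.1
  | cons e rest ih =>
    intro hl hbad c
    by_cases hs : G.s e ∈ X
    · have h1 : PA.basis (Sum.inl (G.s e)) * PA.basis (Sum.inr ⟨e :: rest, hl⟩)
          = PA.basis (Sum.inr ⟨e :: rest, hl⟩) :=
        PA.mul_comp (Sum.inl (G.s e)) (Sum.inr ⟨e :: rest, hl⟩) rfl
      have h2 : c • PA.basis (Sum.inr ⟨e :: rest, hl⟩) =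
          PA.basis (Sum.inl (G.s e)) * (c • PA.basis (Sum.inr ⟨e :: rest, hl⟩)) := by
        rw [mul_smul_comm, h1]
      rw [h2]
      exact TwoSidedIdeal.mul_mem_right _ _ _ (gen_mem PA hs)
    · rcases eq_or_ne rest [] with rfl | hne
      · have hr : G.r e ∈ X := by
          obtain ⟨e', he', h'⟩ := hbad
          rcases List.mem_singleton.1 he' with rfl
          rcases h' with h' | h'
          · exact absurd h' hs
          · exact h'
        have h1 : PA.basis (Sum.inr ⟨[e], hl⟩) * PA.basis (Sum.inl (G.r e))
            = PA.basis (Sum.inr ⟨[e], hl⟩) :=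
          PA.mul_comp (Sum.inr ⟨[e], hl⟩) (Sum.inl (G.r e)) rfl
        have h2 : c • PA.basis (Sum.inr ⟨[e], hl⟩) =
            (c • PA.basis (Sum.inr ⟨[e], hl⟩)) * PA.basis (Sum.inl (G.r e)) := by
          rw [smul_mul_assoc, h1]
        rw [h2]
        exact TwoSidedIdeal.mul_mem_left _ _ _ (gen_mem PA hr)
      · have hrest : rest ≠ [] ∧ G.IsComposable rest := ⟨hne, hl.2.tail⟩
        have hcmp : GPath.rng (GPath.ofEdge e) = GPath.src (Sum.inr ⟨rest, hrest⟩) := by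
          show G.r e = G.s (rest.head hne)
          have := (List.isChain_cons.1 hl.2).1
          exact this _ (by simp [List.head?_eq_head hne])
        have hsplit : PA.basis (GPath.ofEdge e) * PA.basis (Sum.inr ⟨rest, hrest⟩)
            = PA.basis (Sum.inr ⟨e :: rest, hl⟩) := by
          rw [PA.mul_comp _ _ hcmp]
          exact congrArg PA.basis (congrArg Sum.inr (Subtype.ext rfl))
        by_cases hr : G.r e ∈ X
        · have h1 : PA.basis (GPath.ofEdge e) * PA.basis (Sum.inl (G.r e))
              = PA.basis (GPath.ofEdge e) :=
            PA.mul_comp (GPath.ofEdge e) (Sum.inl (G.r e)) rfl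
          have h2 : c • PA.basis (Sum.inr ⟨e :: rest, hl⟩) =
              ((c • PA.basis (GPath.ofEdge e)) * PA.basis (Sum.inl (G.r e)))
                * PA.basis (Sum.inr ⟨rest, hrest⟩) := by
            rw [smul_mul_assoc, h1, smul_mul_assoc, hsplit]
          rw [h2]
          exact TwoSidedIdeal.mul_mem_right _ _ _
            (TwoSidedIdeal.mul_mem_left _ _ _ (gen_mem PA hr))
        · obtain ⟨e', he', hbad'⟩ := hbad
          have he'rest : e' ∈ rest := by
            rcases List.mem_cons.1 he' with rfl | h
            · rcases hbad' with h' | h' <;> [exact absurd h' hs; exact absurd h' hr]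
            · exact h
          have h2 : c • PA.basis (Sum.inr ⟨e :: rest, hl⟩) =
              PA.basis (GPath.ofEdge e) * (c • PA.basis (Sum.inr ⟨rest, hrest⟩)) := by
            rw [mul_smul_comm, hsplit]
          rw [h2]
          exact TwoSidedIdeal.mul_mem_left _ _ _ (ih hrest ⟨e', he'rest, hbad'⟩ c)

lemma smul_basis_mem (c : K) (p : GPath G) (hp : ¬ GoodP X p) :
    c • PA.basis p ∈
      TwoSidedIdeal.span {x : A | ∃ v ∈ X, x = PA.basis (GPath.ofVertex v)} := by
  cases p with
  | inl v =>
      have hv : v ∈ X := by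
        by_contra h
        exact hp h
      have h1 : PA.basis (Sum.inl v) * PA.basis (Sum.inl v) = PA.basis (Sum.inl v) :=
        PA.mul_comp (Sum.inl v) (Sum.inl v) rfl
      have h2 : c • PA.basis (Sum.inl v) =
          PA.basis (Sum.inl v) * (c • PA.basis (Sum.inl v)) := by
        rw [mul_smul_comm, h1]
      rw [h2]
      exact TwoSidedIdeal.mul_mem_right _ _ _ (gen_mem PA hv)
  | inr l =>
      have hbad : ∃ e ∈ l.1, G.s e ∈ X ∨ G.r e ∈ X := by
        by_contra h
        push_neg at h
        exact hp fun e he => h e he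
      exact smul_list_mem PA l.1 l.2 hbad c

lemma subPsi_mem (a : A) :
    a - psiL PA PB (phiL PA PB a) ∈
      TwoSidedIdeal.span {x : A | ∃ v ∈ X, x = PA.basis (GPath.ofVertex v)} := by
  classical
  have ha : a = (PA.basis.repr a).sum fun p k => k • PA.basis p := by
    conv_lhs => rw [← PA.basis.linearCombination_repr a]
    rw [Finsupp.linearCombination_apply]
  have h1 : phiL PA PB a = (PA.basis.repr a).sum fun p k => k • fB PB p := by
    conv_lhs => rw [ha]
    rw [map_finsuppSum]
    exact Finsupp.sum_congr fun p _ => by rw [map_smul, phiL_basis]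
  have h2 : psiL PA PB (phiL PA PB a) =
      (PA.basis.repr a).sum fun p k => k • psiL PA PB (fB PB p) := by
    rw [h1, map_finsuppSum]
    exact Finsupp.sum_congr fun p _ => by rw [map_smul]
  have hkey : ((PA.basis.repr a).sum fun p k => k • (PA.basis p - psiL PA PB (fB PB p)))
      = a - psiL PA PB (phiL PA PB a) := by
    have e1 : ((PA.basis.repr a).sum fun p k => k • (PA.basis p - psiL PA PB (fB PB p)))
        = ((PA.basis.repr a).sum fun p k => k • PA.basis p)
          - (PA.basis.repr a).sum fun p k => k • psiL PA PB (fB PB p) := by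
      rw [← Finsupp.sum_sub]
      exact Finsupp.sum_congr fun p _ => smul_sub _ _ _
    rw [e1, ← ha, ← h2]
  rw [← hkey]
  refine sum_mem fun p _ => ?_
  dsimp only
  by_cases hp : GoodP X p
  · obtain ⟨q, rfl⟩ := exists_iotaP hp
    rw [fB_iota, psiL_basis, sub_self, smul_zero]
    exact zero_mem _
  · rw [fB_bad PB p hp, map_zero, sub_zero]
    exact smul_basis_mem PA _ p hp

end Alg

/-- `KE/(X) ≅ KF` where `F` is the collapse of `E` through the vertex set `X`. -/
theorem stmt0 (K : Type) [Field K] (G : DGraph) (X : Set G.V)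
    (A B : Type) [NonUnitalRing A] [Module K A] [SMulCommClass K A A] [IsScalarTower K A A]
    [NonUnitalRing B] [Module K B] [SMulCommClass K B B] [IsScalarTower K B B]
    (PA : PathAlgebraOn K G A) (PB : PathAlgebraOn K (G.vertexDelete X) B) :
    ∃ φ : A →ₙₐ[K] B, Function.Surjective φ ∧
      ∀ a : A, φ a = 0 ↔
        a ∈ TwoSidedIdeal.span {x : A | ∃ v ∈ X, x = PA.basis (GPath.ofVertex v)} := by
  classical
  refine ⟨phiA PA PB, fun b => ⟨psiL PA PB b, phi_psi PA PB b⟩, fun a => ⟨?_, ?_⟩⟩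
  · intro h
    have h2 := subPsi_mem PA PB a
    have h3 : phiL PA PB a = 0 := h
    rw [h3, map_zero, sub_zero] at h2
    exact h2
  · intro h
    rw [TwoSidedIdeal.mem_span_iff] at h
    refine (TwoSidedIdeal.mem_ker (phiA PA PB)).1 (h (TwoSidedIdeal.ker (phiA PA PB)) ?_)
    rintro x ⟨v, hv, rfl⟩
    rw [SetLike.mem_coe, TwoSidedIdeal.mem_ker]
    show phiL PA PB (PA.basis (GPath.ofVertex v)) = 0
    rw [phiL_basis, fB_bad]
    exact fun hg => hg hv
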